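/- Let p be a stochastic choice function on a menu M and its two-element subsets, and suppose there exists a positive sign-consistent cycle with respect to p(·|M) on some subset M' ⊆ M. Then there exists an MSC model on M that rationalizes p and is not reversible on M with respect to p, i.e. p(k|M)·q_kl(M) ≠ p(l|M)·q_lk(M) for some k,l ∈ M. -/

import Mathlib

open Finset

variable {X : Type*} [DecidableEq X]

/-- The menus relevant to an MSC model on `M`: `M` itself and the two-element subsets of `M`. -/
def RelMenu (M N : Finset X) : Prop := N = M ∨ (N ⊆ M ∧ N.card = 2)

/-- `Q` is row-stochastic on `N`: nonnegative entries, rows summing to 1. -/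
def RowStochOn (N : Finset X) (Q : X → X → ℝ) : Prop :=
  (∀ i ∈ N, ∀ j ∈ N, 0 ≤ Q i j) ∧ ∀ i ∈ N, ∑ j ∈ N, Q i j = 1

/-- The axioms of an MSC model on the menu `M`: row-stochasticity on relevant menus,
(A1) prolonged consideration, (A2) pairwise comparability on binary sets, (A3) TR-IIA. -/
def IsMSC (M : Finset X) (q : Finset X → X → X → ℝ) : Prop :=
  (∀ N, RelMenu M N → RowStochOn N (q N)) ∧
  (∀ N, RelMenu M N → ∀ i ∈ N, 0 < q N i i) ∧
  (∀ i ∈ M, ∀ j ∈ M, i ≠ j → q {i, j} i j = 0 → 0 < q {i, j} j i) ∧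
  (∀ N, RelMenu M N → ∀ i ∈ N, ∀ j ∈ N, i ≠ j →
    q {i, j} i j * q N j i = q {i, j} j i * q N i j)

/-- `p` is a stochastic choice function. -/
def IsSCF (p : Finset X → X → ℝ) : Prop :=
  ∀ N : Finset X, N.Nonempty →
    (∀ i, 0 ≤ p N i) ∧ (∀ i, i ∉ N → p N i = 0) ∧ ∑ i ∈ N, p N i = 1

/-- `σ` is a stationary (row) vector of `Q` on `N`, i.e. `σ (I - Q) = 0` on `N`. -/
def StationaryOn (N : Finset X) (Q : X → X → ℝ) (σ : X → ℝ) : Prop :=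
  ∀ j ∈ N, ∑ i ∈ N, σ i * Q i j = σ j

/-- The MSC model `q` rationalizes `p` on the menu `M`. -/
def Rationalizes (M : Finset X) (q : Finset X → X → X → ℝ) (p : Finset X → X → ℝ) : Prop :=
  IsMSC M q ∧ ∀ N, RelMenu M N → StationaryOn N (q N) (p N)

/-- The weighted difference in choice probabilities `δ_ij(M)`. -/
def delta (p : Finset X → X → ℝ) (M : Finset X) (i j : X) : ℝ :=
  p M i * p {i, j} j - p {i, j} i * p M j

/-- The set of ordered pairs of consecutive elements (with wrap-around) of a list. -/
def cyclePairs (c : List X) : List (X × X) := c.zip (c.rotate 1)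

/-- `c` is a cycle of distinct alternatives lying in (a subset of) `M`. -/
def IsCycleIn (M : Finset X) (c : List X) : Prop :=
  c.Nodup ∧ 2 ≤ c.length ∧ ∀ x ∈ c, x ∈ M

/-- All pairs of the cycle have strictly positive `δ`. -/
def PosConsistent (p : Finset X → X → ℝ) (M : Finset X) (c : List X) : Prop :=
  ∀ pr ∈ cyclePairs c, 0 < delta p M pr.1 pr.2

/-- All pairs of the cycle have strictly negative `δ`. -/
def NegConsistent (p : Finset X → X → ℝ) (M : Finset X) (c : List X) : Prop :=
  ∀ pr ∈ cyclePairs c, delta p M pr.1 pr.2 < 0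

/-- `p(·|M)` is bounded in a cycle over the pair `(i, j)`. -/
def BoundedInCycle (p : Finset X → X → ℝ) (M : Finset X) (i j : X) : Prop :=
  delta p M i j = 0 ∨
    ∃ c : List X, IsCycleIn M c ∧ (i, j) ∈ cyclePairs c ∧
      (PosConsistent p M c ∨ NegConsistent p M c)


section MSCHelpers

set_option linter.unusedSectionVars false

variable {X : Type*} [DecidableEq X]

lemma msc_mem_cyclePairs' {c : List X} {a b : X} :
    (a, b) ∈ cyclePairs c ↔ ∃ t, (getElem? c t) = some a ∧ (getElem? c ((t + 1) % c.length)) = some b := by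
  rw [cyclePairs, List.mem_iff_getElem?]
  constructor
  · rintro ⟨t, ht⟩
    rw [List.getElem?_zip_eq_some] at ht
    obtain ⟨h1, h2⟩ := ht
    have htlt : t < c.length := by
      by_contra h
      push_neg at h
      rw [List.getElem?_eq_none h] at h1
      simp at h1
    refine ⟨t, h1, ?_⟩
    rwa [List.getElem?_rotate htlt] at h2
  · rintro ⟨t, h1, h2⟩
    have htlt : t < c.length := by
      by_contra h
      push_neg at h
      rw [List.getElem?_eq_none h] at h1
      simp at h1
    exact ⟨t, (List.getElem?_zip_eq_some).2 ⟨h1, by rwa [List.getElem?_rotate htlt]⟩⟩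

lemma msc_nodup_get?_inj {c : List X} (h : c.Nodup) {t s : ℕ} {x : X}
    (h1 : (getElem? c t) = some x) (h2 : (getElem? c s) = some x) : t = s := by
  obtain ⟨ht, e1⟩ := List.getElem?_eq_some_iff.1 h1
  obtain ⟨hs, e2⟩ := List.getElem?_eq_some_iff.1 h2
  have h3 := h.get_inj_iff.1 (show c.get ⟨t, ht⟩ = c.get ⟨s, hs⟩ from e1.trans e2.symm)
  exact congrArg Fin.val h3

lemma msc_succ_mod_eq {t m : ℕ} (h : t < m) :
    (t + 1) % m = if t + 1 = m then 0 else t + 1 := by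
  split_ifs with he
  · rw [he, Nat.mod_self]
  · exact Nat.mod_eq_of_lt (by omega)

lemma msc_cyclePairs_of_get? {c : List X} {t : ℕ} {a b : X} (h1 : (getElem? c t) = some a)
    (h2 : (getElem? c ((t + 1) % c.length)) = some b) : (a, b) ∈ cyclePairs c :=
  msc_mem_cyclePairs'.2 ⟨t, h1, h2⟩

lemma msc_cyclePairs_ne {c : List X} (hnd : c.Nodup) (h2 : 2 ≤ c.length)
    {a b : X} (hm : (a, b) ∈ cyclePairs c) : a ≠ b := by
  obtain ⟨t, h1, h2'⟩ := msc_mem_cyclePairs'.1 hm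
  have htlt : t < c.length := by
    by_contra h
    push_neg at h
    rw [List.getElem?_eq_none h] at h1
    simp at h1
  intro hab
  subst hab
  have := msc_nodup_get?_inj hnd h1 h2'
  rw [msc_succ_mod_eq htlt] at this
  split_ifs at this <;> omega

lemma msc_cyclePairs_not_both {c : List X} (hnd : c.Nodup) (h3 : 3 ≤ c.length)
    {a b : X} (hm : (a, b) ∈ cyclePairs c) (hm' : (b, a) ∈ cyclePairs c) : False := by
  obtain ⟨t, h1, h2⟩ := msc_mem_cyclePairs'.1 hm
  obtain ⟨s, h1', h2'⟩ := msc_mem_cyclePairs'.1 hm'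
  have htlt : t < c.length := by
    by_contra h; push_neg at h; rw [List.getElem?_eq_none h] at h1; simp at h1
  have hslt : s < c.length := by
    by_contra h; push_neg at h; rw [List.getElem?_eq_none h] at h1'; simp at h1'
  have e1 : (t + 1) % c.length = s := msc_nodup_get?_inj hnd h2 h1'
  have e2 : (s + 1) % c.length = t := msc_nodup_get?_inj hnd h2' h1
  rw [msc_succ_mod_eq htlt] at e1
  rw [msc_succ_mod_eq hslt] at e2
  split_ifs at e1 e2 <;> omega

lemma msc_cyclePairs_fst_mem {c : List X} {a b : X} (hm : (a, b) ∈ cyclePairs c) : a ∈ c := by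
  obtain ⟨t, h1, _⟩ := msc_mem_cyclePairs'.1 hm
  exact List.mem_of_getElem? h1

lemma msc_cyclePairs_snd_mem {c : List X} {a b : X} (hm : (a, b) ∈ cyclePairs c) : b ∈ c := by
  obtain ⟨t, _, h2⟩ := msc_mem_cyclePairs'.1 hm
  exact List.mem_of_getElem? h2

lemma msc_cyclePairs_exists_fst {c : List X} {j : X} (hj : j ∈ c) :
    ∃ k, (j, k) ∈ cyclePairs c := by
  obtain ⟨⟨s, hs⟩, rfl⟩ := List.mem_iff_get.1 hj
  have hlt : (s + 1) % c.length < c.length := Nat.mod_lt _ (by omega)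
  exact ⟨c.get ⟨_, hlt⟩, msc_cyclePairs_of_get? (List.getElem?_eq_getElem hs) (List.getElem?_eq_getElem hlt)⟩

lemma msc_cyclePairs_exists_snd {c : List X} {j : X} (hj : j ∈ c) :
    ∃ i, (i, j) ∈ cyclePairs c := by
  obtain ⟨⟨s, hs⟩, rfl⟩ := List.mem_iff_get.1 hj
  set t := if s = 0 then c.length - 1 else s - 1 with hts
  have htlt : t < c.length := by rw [hts]; split_ifs <;> omega
  have hmod : (t + 1) % c.length = s := by
    rw [hts]
    split_ifs with h0
    · subst h0
      have he : c.length - 1 + 1 = c.length := by omega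
      rw [he, Nat.mod_self]
    · rw [Nat.mod_eq_of_lt (by omega)]
      omega
  refine ⟨c.get ⟨t, htlt⟩, msc_cyclePairs_of_get? (List.getElem?_eq_getElem htlt) ?_⟩
  rw [hmod]
  exact List.getElem?_eq_getElem hs

lemma msc_cyclePairs_unique_snd {c : List X} (hnd : c.Nodup) {i i' j : X}
    (h : (i, j) ∈ cyclePairs c) (h' : (i', j) ∈ cyclePairs c) : i = i' := by
  obtain ⟨t, h1, h2⟩ := msc_mem_cyclePairs'.1 h
  obtain ⟨s, h1', h2'⟩ := msc_mem_cyclePairs'.1 h'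
  have htlt : t < c.length := by
    by_contra hx; push_neg at hx; rw [List.getElem?_eq_none hx] at h1; simp at h1
  have hslt : s < c.length := by
    by_contra hx; push_neg at hx; rw [List.getElem?_eq_none hx] at h1'; simp at h1'
  have e : (t + 1) % c.length = (s + 1) % c.length := msc_nodup_get?_inj hnd h2 h2'
  have ets : t = s := by
    rw [msc_succ_mod_eq htlt, msc_succ_mod_eq hslt] at e
    split_ifs at e <;> omega
  subst ets
  rw [h1] at h1'
  exact Option.some_injective _ h1'

lemma msc_cyclePairs_unique_fst {c : List X} (hnd : c.Nodup) {i j j' : X}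
    (h : (i, j) ∈ cyclePairs c) (h' : (i, j') ∈ cyclePairs c) : j = j' := by
  obtain ⟨t, h1, h2⟩ := msc_mem_cyclePairs'.1 h
  obtain ⟨s, h1', h2'⟩ := msc_mem_cyclePairs'.1 h'
  have ets : t = s := msc_nodup_get?_inj hnd h1 h1'
  subst ets
  rw [h2] at h2'
  exact Option.some_injective _ h2'

lemma msc_delta_anti (p : Finset X → X → ℝ) (M : Finset X) (i j : X) :
    delta p M j i = - delta p M i j := by
  unfold delta; rw [Finset.pair_comm j i]; ring

lemma msc_count_in_eq_out (M : Finset X) {c : List X} (hnd : c.Nodup) (h2 : 2 ≤ c.length)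
    (hsub : ∀ x ∈ c, x ∈ M) (j : X) :
    ∑ i ∈ M.erase j, (if (i, j) ∈ cyclePairs c then (1:ℝ) else 0)
      = ∑ i ∈ M.erase j, (if (j, i) ∈ cyclePairs c then (1:ℝ) else 0) := by
  by_cases hj : j ∈ c
  · obtain ⟨i₀, hi₀⟩ := msc_cyclePairs_exists_snd hj
    obtain ⟨k₀, hk₀⟩ := msc_cyclePairs_exists_fst hj
    have hi₀M : i₀ ∈ M.erase j :=
      Finset.mem_erase.2 ⟨msc_cyclePairs_ne hnd h2 hi₀, hsub _ (msc_cyclePairs_fst_mem hi₀)⟩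
    have hk₀M : k₀ ∈ M.erase j :=
      Finset.mem_erase.2 ⟨(msc_cyclePairs_ne hnd h2 hk₀).symm, hsub _ (msc_cyclePairs_snd_mem hk₀)⟩
    rw [Finset.sum_eq_single_of_mem i₀ hi₀M, Finset.sum_eq_single_of_mem k₀ hk₀M,
      if_pos hi₀, if_pos hk₀]
    · intro b _ hb
      exact if_neg (fun h => hb (msc_cyclePairs_unique_fst hnd h hk₀))
    · intro b _ hb
      exact if_neg (fun h => hb (msc_cyclePairs_unique_snd hnd h hi₀))
  · rw [Finset.sum_eq_zero, Finset.sum_eq_zero]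
    · intro i _
      exact if_neg (fun h => hj (msc_cyclePairs_fst_mem h))
    · intro i _
      exact if_neg (fun h => hj (msc_cyclePairs_snd_mem h))

/-- Off-diagonal transition rates (before scaling) of the perturbed chain on `M`. -/
noncomputable def mscR (p : Finset X → X → ℝ) (M : Finset X) (c : List X) (k l : X) : ℝ :=
  if (k, l) ∈ cyclePairs c ∨ (l, k) ∈ cyclePairs c then p {k, l} l / |delta p M k l| else 0

noncomputable def mscS (p : Finset X → X → ℝ) (M : Finset X) (c : List X) : ℝ :=
  ∑ k ∈ M, ∑ l ∈ M.erase k, mscR p M c k l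

noncomputable def mscC (p : Finset X → X → ℝ) (M : Finset X) (c : List X) : ℝ :=
  (2 * (mscS p M c + 1))⁻¹

/-- The big transition matrix on `M`. -/
noncomputable def mscBig (p : Finset X → X → ℝ) (M : Finset X) (c : List X) (k l : X) : ℝ :=
  if k = l then 1 - mscC p M c * ∑ j ∈ M.erase k, mscR p M c k j
  else mscC p M c * mscR p M c k l

/-- The transition matrix on binary menus. -/
noncomputable def mscBin (p : Finset X → X → ℝ) (N : Finset X) (k l : X) : ℝ :=
  if k = l then 1 - (1 - p N k) / 2 else p N l / 2

noncomputable def mscQ (p : Finset X → X → ℝ) (M : Finset X) (c : List X)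
    (N : Finset X) : X → X → ℝ :=
  if N = M then mscBig p M c else mscBin p N

lemma mscR_nonneg {p : Finset X → X → ℝ} (hp : IsSCF p) (M : Finset X) (c : List X)
    (k l : X) : 0 ≤ mscR p M c k l := by
  unfold mscR
  split_ifs
  · exact div_nonneg ((hp {k, l} (Finset.insert_nonempty _ _)).1 l) (abs_nonneg _)
  · exact le_rfl

lemma mscS_nonneg {p : Finset X → X → ℝ} (hp : IsSCF p) (M : Finset X) (c : List X) :
    0 ≤ mscS p M c :=
  Finset.sum_nonneg fun k _ => Finset.sum_nonneg fun l _ => mscR_nonneg hp M c k l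

lemma mscC_pos {p : Finset X → X → ℝ} (hp : IsSCF p) (M : Finset X) (c : List X) :
    0 < mscC p M c := by
  have := mscS_nonneg hp M c
  unfold mscC
  positivity

lemma mscC_row_le {p : Finset X → X → ℝ} (hp : IsSCF p) (M : Finset X) (c : List X)
    {k : X} (hk : k ∈ M) :
    mscC p M c * ∑ l ∈ M.erase k, mscR p M c k l ≤ 1 / 2 := by
  have hRk : ∑ l ∈ M.erase k, mscR p M c k l ≤ mscS p M c :=
    Finset.single_le_sum (f := fun k => ∑ l ∈ M.erase k, mscR p M c k l)
      (fun i _ => Finset.sum_nonneg fun l _ => mscR_nonneg hp M c i l) hk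
  have hS := mscS_nonneg hp M c
  have hCpos := mscC_pos hp M c
  calc mscC p M c * ∑ l ∈ M.erase k, mscR p M c k l
      ≤ mscC p M c * (mscS p M c + 1) :=
        mul_le_mul_of_nonneg_left (by linarith) hCpos.le
    _ = 1 / 2 := by
        unfold mscC
        rw [inv_mul_eq_div]
        rw [div_eq_iff (by positivity)]
        ring

lemma mscR_triia (p : Finset X → X → ℝ) (M : Finset X) (c : List X) (i j : X) :
    p {i, j} j * mscR p M c j i = p {i, j} i * mscR p M c i j := by
  unfold mscR
  rw [Finset.pair_comm j i, msc_delta_anti, abs_neg]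
  by_cases h : (i, j) ∈ cyclePairs c ∨ (j, i) ∈ cyclePairs c
  · rw [if_pos h, if_pos (Or.comm.1 h)]
    ring
  · rw [if_neg h, if_neg (fun h' => h (Or.comm.1 h'))]
    ring

lemma mscR_flow {p : Finset X → X → ℝ} {M : Finset X} {c : List X}
    (hnd : c.Nodup) (h3 : 3 ≤ c.length) (hpos : PosConsistent p M c)
    (i j : X) :
    p M i * mscR p M c i j - p M j * mscR p M c j i
      = (if (i, j) ∈ cyclePairs c then (1:ℝ) else 0)
        - (if (j, i) ∈ cyclePairs c then (1:ℝ) else 0) := by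
  have key : ∀ a b : X, (a, b) ∈ cyclePairs c →
      p M a * mscR p M c a b - p M b * mscR p M c b a = 1 := by
    intro a b hab
    have hd : 0 < delta p M a b := hpos (a, b) hab
    unfold mscR
    rw [if_pos (Or.inl hab), if_pos (Or.inr hab), Finset.pair_comm b a, msc_delta_anti p M a b,
      abs_neg, abs_of_pos hd]
    have hd' : delta p M a b ≠ 0 := ne_of_gt hd
    field_simp
    unfold delta
    ring
  by_cases h1 : (i, j) ∈ cyclePairs c
  · have h2 : (j, i) ∉ cyclePairs c := fun h => msc_cyclePairs_not_both hnd h3 h1 h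
    rw [if_pos h1, if_neg h2, key i j h1]
    norm_num
  · by_cases h2 : (j, i) ∈ cyclePairs c
    · rw [if_neg h1, if_pos h2]
      have := key j i h2
      linarith
    · rw [if_neg h1, if_neg h2]
      unfold mscR
      rw [if_neg (fun h => (Or.elim h h1 h2)), if_neg (fun h => (Or.elim h h2 h1))]
      ring

lemma mscBin_props {p : Finset X → X → ℝ} (hp : IsSCF p) {N : Finset X} (hN2 : N.card = 2) :
    (∀ i ∈ N, ∀ j ∈ N, 0 ≤ mscBin p N i j) ∧ (∀ i ∈ N, ∑ j ∈ N, mscBin p N i j = 1) ∧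
    (∀ i ∈ N, 0 < mscBin p N i i) ∧ (∀ j ∈ N, ∑ i ∈ N, p N i * mscBin p N i j = p N j) := by
  obtain ⟨a, b, hab, rfl⟩ := Finset.card_eq_two.1 hN2
  have hpN := hp {a, b} (Finset.insert_nonempty _ _)
  have hsum : p {a, b} a + p {a, b} b = 1 := by
    have := hpN.2.2
    rwa [Finset.sum_pair hab] at this
  have hnn := hpN.1
  refine ⟨?_, ?_, ?_, ?_⟩
  · intro i _ j _
    unfold mscBin
    split_ifs
    · linarith [hnn i]
    · linarith [hnn j]
  · intro i hi
    rw [Finset.sum_pair hab]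
    rcases Finset.mem_insert.1 hi with rfl | hi'
    · unfold mscBin
      rw [if_pos rfl, if_neg hab]
      linarith
    · rw [Finset.mem_singleton.1 hi']
      unfold mscBin
      rw [if_pos rfl, if_neg (fun h => hab h.symm)]
      linarith
  · intro i _
    unfold mscBin
    rw [if_pos rfl]
    linarith [hnn i]
  · intro j hj
    rw [Finset.sum_pair hab]
    rcases Finset.mem_insert.1 hj with rfl | hj'
    · unfold mscBin
      rw [if_pos rfl, if_neg (fun h => hab h.symm)]
      linear_combination (p {j, b} j / 2) * hsum
    · rw [Finset.mem_singleton.1 hj']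
      unfold mscBin
      rw [if_pos rfl, if_neg hab]
      linear_combination (p {a, b} b / 2) * hsum

end MSCHelpers


/-- If `p(·|M)` admits a positive sign-consistent cycle on some subset of `M`, then there
exists an MSC model rationalizing `p` on `M` that is not reversible on `M` w.r.t. `p`. -/
theorem stmt3 (M : Finset X) (hM : M.Nonempty)
    (p : Finset X → X → ℝ) (hp : IsSCF p)
    (hcyc : ∃ c : List X, IsCycleIn M c ∧ PosConsistent p M c) :
    ∃ q : Finset X → X → X → ℝ, Rationalizes M q p ∧
      ∃ k ∈ M, ∃ l ∈ M, p M k * q M k l ≠ p M l * q M l k := by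
  obtain ⟨c, ⟨hnd, h2, hsub⟩, hpos⟩ := hcyc
  -- the cycle has length at least 3
  have h3 : 3 ≤ c.length := by
    rcases lt_or_ge c.length 3 with hlt | h3
    · exfalso
      have hl2 : c.length = 2 := by omega
      have h0 : (0:ℕ) < c.length := by omega
      have h1 : (1:ℕ) < c.length := by omega
      set a := c.get ⟨0, h0⟩
      set b := c.get ⟨1, h1⟩
      have hab : (a, b) ∈ cyclePairs c := by
        refine msc_cyclePairs_of_get? (List.getElem?_eq_getElem h0) ?_
        have : (0 + 1) % c.length = 1 := by rw [hl2]
        rw [this]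
        exact List.getElem?_eq_getElem h1
      have hba : (b, a) ∈ cyclePairs c := by
        refine msc_cyclePairs_of_get? (List.getElem?_eq_getElem h1) ?_
        have : (1 + 1) % c.length = 0 := by rw [hl2]
        rw [this]
        exact List.getElem?_eq_getElem h0
      have d1 := hpos (a, b) hab
      have d2 := hpos (b, a) hba
      have := msc_delta_anti p M a b
      simp only at d1 d2
      linarith
    · exact h3
  have hM3 : 3 ≤ M.card := by
    have hsub' : c.toFinset ⊆ M := fun x hx => hsub x (List.mem_toFinset.1 hx)
    calc 3 ≤ c.length := h3
      _ = c.toFinset.card := (List.toFinset_card_of_nodup hnd).symm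
      _ ≤ M.card := Finset.card_le_card hsub'
  have hC := mscC_pos hp M c
  have hflow := mscR_flow hnd h3 hpos
  have hqM : mscQ p M c M = mscBig p M c := if_pos rfl
  have hqN : ∀ N : Finset X, N.card = 2 → mscQ p M c N = mscBin p N := by
    intro N hN2
    refine if_neg ?_
    intro he
    rw [he] at hN2
    omega
  have hpair : ∀ i j : X, i ≠ j → mscQ p M c {i, j} = mscBin p {i, j} :=
    fun i j hij => hqN _ (Finset.card_pair hij)
  -- the diagonal entries of the big matrix
  have hBigDiag : ∀ k, mscBig p M c k k
      = 1 - mscC p M c * ∑ j ∈ M.erase k, mscR p M c k j := fun k => if_pos rfl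
  have hBigOff : ∀ k l : X, k ≠ l → mscBig p M c k l = mscC p M c * mscR p M c k l :=
    fun k l hkl => if_neg hkl
  refine ⟨mscQ p M c, ⟨⟨?_, ?_, ?_, ?_⟩, ?_⟩, ?_⟩
  · -- row stochasticity
    intro N hrel
    rcases hrel with hNM | ⟨hsubN, h2N⟩
    · subst hNM
      rw [hqM]
      constructor
      · intro i hi j hj
        by_cases hij : i = j
        · subst hij
          rw [hBigDiag]
          linarith [mscC_row_le hp N c hi]
        · rw [hBigOff i j hij]
          exact mul_nonneg hC.le (mscR_nonneg hp N c i j)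
      · intro i hi
        rw [← Finset.add_sum_erase N _ hi]
        have hrest : ∑ j ∈ N.erase i, mscBig p N c i j
            = mscC p N c * ∑ j ∈ N.erase i, mscR p N c i j := by
          rw [Finset.mul_sum]
          refine Finset.sum_congr rfl fun j hj => ?_
          rw [hBigOff i j (fun he => (Finset.mem_erase.1 hj).1 he.symm)]
        rw [hrest, hBigDiag]
        ring
    · rw [hqN N h2N]
      obtain ⟨hnn, hrow, _, _⟩ := mscBin_props hp h2N
      exact ⟨hnn, hrow⟩
  · -- A1
    intro N hrel
    rcases hrel with hNM | ⟨hsubN, h2N⟩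
    · subst hNM
      intro i hi
      rw [hqM, hBigDiag]
      linarith [mscC_row_le hp N c hi]
    · rw [hqN N h2N]
      exact (mscBin_props hp h2N).2.2.1
  · -- A2
    intro i hi j hj hij h0
    rw [hpair i j hij] at h0 ⊢
    unfold mscBin at h0 ⊢
    rw [if_neg hij] at h0
    rw [if_neg (fun h => hij h.symm)]
    have hpN := hp {i, j} (Finset.insert_nonempty _ _)
    have hsum : p {i, j} i + p {i, j} j = 1 := by
      have := hpN.2.2
      rwa [Finset.sum_pair hij] at this
    have : p {i, j} j = 0 := by linarith
    linarith
  · -- A3 (TR-IIA)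
    intro N hrel i hi j hj hij
    rcases hrel with hNM | ⟨hsubN, h2N⟩
    · subst hNM
      rw [hpair i j hij, hqM, hBigOff j i (fun h => hij h.symm), hBigOff i j hij]
      unfold mscBin
      rw [if_neg hij, if_neg (fun h => hij h.symm)]
      linear_combination (mscC p N c / 2) * mscR_triia p N c i j
    · have hNij : ({i, j} : Finset X) = N := by
        refine Finset.eq_of_subset_of_card_le ?_ ?_
        · intro x hx
          rcases Finset.mem_insert.1 hx with rfl | hx'
          · exact hi
          · rw [Finset.mem_singleton.1 hx']; exact hj
        · rw [h2N, Finset.card_pair hij]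
      rw [hNij]
      exact mul_comm _ _
  · -- stationarity
    intro N hrel
    rcases hrel with hNM | ⟨hsubN, h2N⟩
    · subst hNM
      rw [hqM]
      intro j hj
      rw [← Finset.add_sum_erase N _ hj]
      have hrest : ∑ i ∈ N.erase j, p N i * mscBig p N c i j
          = mscC p N c * ∑ i ∈ N.erase j, p N i * mscR p N c i j := by
        rw [Finset.mul_sum]
        refine Finset.sum_congr rfl fun i hi => ?_
        rw [hBigOff i j (Finset.mem_erase.1 hi).1]
        ring
      have hkey : ∑ i ∈ N.erase j, p N i * mscR p N c i j
          = ∑ i ∈ N.erase j, p N j * mscR p N c j i := by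
        have h1 : ∑ i ∈ N.erase j, (p N i * mscR p N c i j - p N j * mscR p N c j i)
            = ∑ i ∈ N.erase j, ((if (i, j) ∈ cyclePairs c then (1:ℝ) else 0)
              - (if (j, i) ∈ cyclePairs c then (1:ℝ) else 0)) :=
          Finset.sum_congr rfl fun i _ => hflow i j
        rw [Finset.sum_sub_distrib, Finset.sum_sub_distrib] at h1
        have h2' := msc_count_in_eq_out N hnd h2 hsub j
        linarith
      rw [hrest, hkey, hBigDiag, ← Finset.mul_sum]
      ring
    · rw [hqN N h2N]
      exact (mscBin_props hp h2N).2.2.2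
  · -- non-reversibility
    have h0 : (0:ℕ) < c.length := by omega
    have h1 : (1:ℕ) < c.length := by omega
    set k := c.get ⟨0, h0⟩ with hk
    set l := c.get ⟨1, h1⟩ with hl
    have hkl : (k, l) ∈ cyclePairs c := by
      refine msc_cyclePairs_of_get? (List.getElem?_eq_getElem h0) ?_
      have he : (0 + 1) % c.length = 1 := Nat.mod_eq_of_lt h1
      rw [he]
      exact List.getElem?_eq_getElem h1
    have hne : k ≠ l := msc_cyclePairs_ne hnd h2 hkl
    refine ⟨k, hsub _ (List.get_mem c ⟨0, h0⟩), l, hsub _ (List.get_mem c ⟨1, h1⟩), ?_⟩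
    rw [hqM, hBigOff k l hne, hBigOff l k (fun h => hne h.symm)]
    intro heq
    have hf := hflow k l
    rw [if_pos hkl, if_neg (fun h => msc_cyclePairs_not_both hnd h3 hkl h)] at hf
    have hx : mscC p M c * (p M k * mscR p M c k l) - mscC p M c * (p M l * mscR p M c l k)
        = mscC p M c := by linear_combination (mscC p M c) * hf
    nlinarith [hC, hx, heq]
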